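/- arXiv:1502.01381 — 4 statements merged into one kernel-verified Lean document; each statement's English description precedes it below -/
import Mathlib

section
/- Let $k$ be a field of characteristic $p>0$, let $F/k$ be a field extension in which $k$ is purely inseparably closed (i.e., every $x \in F$ with $x^p \in k$ lies in $k$), and let $k'/k$ be a purely inseparable field extension of degree $p$. Then the ring $F \otimes_k k'$ is a field. -/
open scoped TensorProduct
open Polynomial

set_option maxHeartbeats 1000000

/-- Let `k` be a field of characteristic `p > 0`, let `F/k` be a field extension in which `k`
is purely inseparably closed (every `x ∈ F` with `x ^ p ∈ k` lies in `k`), and let `k'/k` be a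
purely inseparable field extension of degree `p`. Then `F ⊗[k] k'` is a field. -/
theorem stmt0 (p : ℕ) [Fact p.Prime] (k F k' : Type*) [Field k] [Field F] [Field k']
    [Algebra k F] [Algebra k k'] [CharP k p]
    (hclosed : ∀ x : F, x ^ p ∈ (algebraMap k F).range → x ∈ (algebraMap k F).range)
    [IsPurelyInseparable k k'] (hdeg : Module.finrank k k' = p) :
    IsField (F ⊗[k] k') := by
  have hp : p.Prime := Fact.out
  have : FiniteDimensional k k' := Module.finite_of_finrank_pos (by rw [hdeg]; exact hp.pos)
  have : CharP k' p := charP_of_injective_algebraMap (algebraMap k k').injective p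
  -- find y ∉ range with y ^ p ∈ range
  have hnt : ∃ x : k', x ∉ (algebraMap k k').range := by
    by_contra h
    push_neg at h
    have hb : Function.Bijective (Algebra.linearMap k k') := ⟨(algebraMap k k').injective, h⟩
    have := (LinearEquiv.ofBijective (Algebra.linearMap k k') hb).finrank_eq
    rw [Module.finrank_self, hdeg] at this
    exact hp.one_lt.ne this
  obtain ⟨x, hx⟩ := hnt
  obtain ⟨n, hn⟩ := IsPurelyInseparable.pow_mem k p x
  have key : ∀ (n : ℕ) (x : k'), x ∉ (algebraMap k k').range →
      x ^ p ^ n ∈ (algebraMap k k').range →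
      ∃ y : k', y ∉ (algebraMap k k').range ∧ y ^ p ∈ (algebraMap k k').range := by
    intro n
    induction n with
    | zero => intro x hx hx'; simp at hx'; exact absurd hx' hx
    | succ n ih =>
      intro x hx hx'
      by_cases h : x ^ p ∈ (algebraMap k k').range
      · exact ⟨x, hx, h⟩
      · exact ih _ h (by rwa [← pow_mul, ← pow_succ'] )
  obtain ⟨y, hy, hyp⟩ := key n x hx hn
  obtain ⟨c, hc⟩ := hyp
  -- irreducibility over F
  have hirr : Irreducible (X ^ p - C (algebraMap k F c)) := by
    apply X_pow_sub_C_irreducible_of_prime hp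
    intro b hb
    have hb' : b ∈ (algebraMap k F).range := hclosed b ⟨c, hb.symm⟩
    obtain ⟨b0, rfl⟩ := hb'
    have : b0 ^ p = c := by
      apply (algebraMap k F).injective
      rw [map_pow, hb]
    have : (algebraMap k k' b0) ^ p = y ^ p := by
      rw [← map_pow, this, hc]
    have heq : algebraMap k k' b0 = y :=
      frobenius_inj k' p (by simpa only [frobenius_def] using this)
    exact hy ⟨b0, heq⟩
  -- the algebra map φ
  set φ : F[X] →ₐ[F] F ⊗[k] k' := aeval ((1 : F) ⊗ₜ[k] y) with hφ
  -- surjectivity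
  have hadj : Algebra.adjoin k {y} = ⊤ := by
    have hyint : IsIntegral k y := Algebra.IsIntegral.isIntegral y
    have h1 : IntermediateField.adjoin k {y} = ⊤ := by
      have hdvd : Module.finrank k (IntermediateField.adjoin k {y}) ∣ p := by
        rw [← hdeg]
        exact ⟨Module.finrank (IntermediateField.adjoin k {y}) k',
          (Module.finrank_mul_finrank k (IntermediateField.adjoin k {y}) k').symm⟩
      rcases (hp.eq_one_or_self_of_dvd _ hdvd) with h | h
      · exfalso
        have : IntermediateField.adjoin k {y} = ⊥ :=
          IntermediateField.finrank_eq_one_iff.mp h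
        have : y ∈ (⊥ : IntermediateField k k') := by
          rw [← this]; exact IntermediateField.mem_adjoin_simple_self k y
        rw [IntermediateField.mem_bot] at this
        obtain ⟨z, hz⟩ := this
        exact hy ⟨z, hz⟩
      · apply IntermediateField.toSubalgebra_injective
        rw [IntermediateField.top_toSubalgebra, ← Algebra.toSubmodule_eq_top]
        apply Submodule.eq_top_of_finrank_eq
        rw [hdeg, ← h]
        rfl
    have := congrArg IntermediateField.toSubalgebra h1
    rwa [IntermediateField.adjoin_simple_toSubalgebra_of_isAlgebraic hyint.isAlgebraic,
      IntermediateField.top_toSubalgebra] at this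
  have hsurj : Function.Surjective φ := by
    rw [← AlgHom.range_eq_top, hφ, ← Algebra.adjoin_singleton_eq_range_aeval, eq_top_iff]
    rintro z -
    induction z using TensorProduct.induction_on with
    | zero => exact zero_mem _
    | add a b ha hb => exact add_mem ha hb
    | tmul a b =>
      have h1b : (1 : F) ⊗ₜ[k] b ∈ Algebra.adjoin F {(1 : F) ⊗ₜ[k] y} := by
        have : b ∈ Algebra.adjoin k {y} := hadj ▸ Algebra.mem_top
        have h2 : (1 : F) ⊗ₜ[k] b ∈ (Algebra.adjoin k {y}).map
            (Algebra.TensorProduct.includeRight (R := k) (A := F) (B := k')) :=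
          ⟨b, this, rfl⟩
        rw [AlgHom.map_adjoin] at h2
        have hle : Algebra.adjoin k ((Algebra.TensorProduct.includeRight (R := k) (A := F)
            (B := k')) '' {y}) ≤
            (Algebra.adjoin F {(1 : F) ⊗ₜ[k] y}).restrictScalars k := by
          apply Algebra.adjoin_le
          rintro _ ⟨w, hw, rfl⟩
          rw [Set.mem_singleton_iff] at hw
          subst hw
          rw [Algebra.TensorProduct.includeRight_apply]
          exact Algebra.subset_adjoin rfl
        exact hle h2
      have : a ⊗ₜ[k] b = (algebraMap F (F ⊗[k] k') a) * ((1 : F) ⊗ₜ[k] b) := by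
        rw [Algebra.TensorProduct.algebraMap_apply, Algebra.TensorProduct.tmul_mul_tmul,
          mul_one, one_mul, Algebra.algebraMap_self_apply]
      rw [this]
      exact mul_mem (Subalgebra.algebraMap_mem _ _) h1b
  -- kernel
  have hker0 : φ (X ^ p - C (algebraMap k F c)) = 0 := by
    rw [hφ]
    simp only [map_sub, map_pow, aeval_X, aeval_C]
    rw [Algebra.TensorProduct.tmul_pow, one_pow, ← hc,
      Algebra.TensorProduct.algebraMap_apply, ← IsScalarTower.algebraMap_apply]
    rw [← Algebra.TensorProduct.algebraMap_apply' (B := k'), Algebra.TensorProduct.algebraMap_apply,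
      sub_self]
  set I : Ideal F[X] := Ideal.span {X ^ p - C (algebraMap k F c)} with hI
  have hmax : I.IsMaximal := PrincipalIdealRing.isMaximal_of_irreducible hirr
  have hnt' : Nontrivial (F ⊗[k] k') := by
    rw [← not_subsingleton_iff_nontrivial, ← rank_zero_iff (R := F), Module.rank_baseChange,
      Cardinal.lift_eq_zero, rank_zero_iff, not_subsingleton_iff_nontrivial]
    infer_instance
  have hker : RingHom.ker φ = I := by
    have hle : I ≤ RingHom.ker φ := by
      rw [hI, Ideal.span_le, Set.singleton_subset_iff]
      exact hker0
    exact ((hmax.eq_of_le (RingHom.ker_ne_top _) hle)).symm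
  let e : (F[X] ⧸ I) ≃+* F ⊗[k] k' := hker ▸ RingHom.quotientKerEquivOfSurjective hsurj
  letI : Field (F[X] ⧸ I) := Ideal.Quotient.field I
  exact e.symm.toMulEquiv.isField (Field.toIsField _)
end

section
/- Let $k$ be a field, let $F$ be a field extension of $k$ that is finitely generated as a field over $k$, and let $A$ be a Noetherian $k$-algebra. Then the ring $F \otimes_k A$ is Noetherian. -/
open scoped TensorProduct

set_option synthInstance.maxHeartbeats 1000000
set_option maxHeartbeats 1000000

/-- Let `k` be a field, `F` a field extension of `k` that is finitely generated as a field
over `k`, and `A` an arbitrary Noetherian `k`-algebra. Then `F ⊗[k] A` is Noetherian. -/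
theorem stmt2 (k F A : Type*) [Field k] [Field F] [Algebra k F]
    (hfg : ∃ s : Finset F, IntermediateField.adjoin k (s : Set F) = ⊤)
    [CommRing A] [Algebra k A] [IsNoetherianRing A] :
    IsNoetherianRing (F ⊗[k] A) := by
  obtain ⟨s, hs⟩ := hfg
  set B : Subalgebra k F := Algebra.adjoin k (s : Set F) with hB
  haveI hftB : Algebra.FiniteType k B :=
    (Subalgebra.fg_iff_finiteType B).mp (Subalgebra.fg_adjoin_finset s)
  haveI hnoethAB : IsNoetherianRing (A ⊗[k] B) :=
    Algebra.FiniteType.isNoetherianRing A (A ⊗[k] B)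
  -- membership of evaluated polynomials in B
  have h1 := Algebra.adjoin_range_eq_range_aeval k (Subtype.val : ↥(s : Set F) → F)
  rw [Subtype.range_coe] at h1
  have hmem : ∀ r : MvPolynomial ↥(s : Set F) k,
      (MvPolynomial.aeval (Subtype.val : ↥(s : Set F) → F)) r ∈ B := by
    intro r
    rw [hB, h1]
    exact ⟨r, rfl⟩
  let φ : A ⊗[k] B →+* A ⊗[k] F := (Algebra.TensorProduct.map (AlgHom.id k A) B.val).toRingHom
  have hφ_tmul : ∀ (a : A) (b : B), φ (a ⊗ₜ b) = a ⊗ₜ (b : F) := fun a b => rfl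
  have hφinj : Function.Injective φ := by
    have hval : Function.Injective (B.val.toLinearMap) := Subtype.val_injective
    have h2 := Module.Flat.lTensor_preserves_injective_linearMap (M := A)
      B.val.toLinearMap hval
    have heq : ∀ x, φ x = LinearMap.lTensor A B.val.toLinearMap x := by
      intro x
      induction x using TensorProduct.induction_on with
      | zero => simp
      | tmul a b => simp [φ]
      | add x y hx hy => simp [map_add, hx, hy]
    intro x y hxy
    exact h2 (by rw [← heq, ← heq, hxy])
  let M : Submonoid (A ⊗[k] B) :=
    Submonoid.map (Algebra.TensorProduct.includeRight (R := k) (A := A)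
      (B := B)).toRingHom.toMonoidHom (nonZeroDivisors B)
  letI : Algebra (A ⊗[k] B) (A ⊗[k] F) := φ.toAlgebra
  have halg : ∀ x, algebraMap (A ⊗[k] B) (A ⊗[k] F) x = φ x := fun _ => rfl
  haveI : IsLocalization M (A ⊗[k] F) := by
    refine { map_units := ?_, surj := ?_, exists_of_eq := ?_ }
    · rintro ⟨_, b, hb, rfl⟩
      have hb0 : b ≠ 0 := nonZeroDivisors.ne_zero hb
      have hbF : (b : F) ≠ 0 := fun h => hb0 (by exact_mod_cast h)
      have key : algebraMap (A ⊗[k] B) (A ⊗[k] F)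
          ((Algebra.TensorProduct.includeRight (R := k) (A := A) (B := B)).toRingHom b)
          = (Algebra.TensorProduct.includeRight : F →ₐ[k] A ⊗[k] F) (b : F) := rfl
      exact key ▸ ((isUnit_iff_ne_zero.mpr hbF).map
        (Algebra.TensorProduct.includeRight : F →ₐ[k] A ⊗[k] F))
    · intro z
      induction z using TensorProduct.induction_on with
      | zero => exact ⟨(0, 1), by simp [halg]⟩
      | tmul a x =>
        have hx : x ∈ IntermediateField.adjoin k (s : Set F) := hs ▸ trivial
        rw [IntermediateField.mem_adjoin_iff] at hx
        obtain ⟨r, q, hrq⟩ := hx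
        by_cases hq : (MvPolynomial.aeval (Subtype.val : ↥(s : Set F) → F)) q = 0
        · have hx0 : x = 0 := by rw [hrq, hq, div_zero]
          exact ⟨(0, 1), by simp [halg, hx0]⟩
        · have hqB : ((⟨_, hmem q⟩ : B) : F) ≠ 0 := hq
          have hqne : (⟨_, hmem q⟩ : B) ≠ 0 := fun h => hqB (by rw [h]; rfl)
          refine ⟨(a ⊗ₜ ⟨_, hmem r⟩,
            ⟨Algebra.TensorProduct.includeRight ⟨_, hmem q⟩,
              ⟨⟨_, hmem q⟩, mem_nonZeroDivisors_of_ne_zero hqne, rfl⟩⟩), ?_⟩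
          show (a ⊗ₜ x) * φ ((1 : A) ⊗ₜ (⟨_, hmem q⟩ : B)) = φ (a ⊗ₜ (⟨_, hmem r⟩ : B))
          rw [hφ_tmul, hφ_tmul, Algebra.TensorProduct.tmul_mul_tmul, mul_one]
          congr 1
          rw [hrq]
          exact div_mul_cancel₀ _ hq
      | add z1 z2 h1 h2 =>
        obtain ⟨⟨y1, m1⟩, e1⟩ := h1
        obtain ⟨⟨y2, m2⟩, e2⟩ := h2
        refine ⟨(y1 * (m2 : A ⊗[k] B) + y2 * (m1 : A ⊗[k] B), m1 * m2), ?_⟩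
        have hm : ((m1 * m2 : M) : A ⊗[k] B) = (m1 : A ⊗[k] B) * (m2 : A ⊗[k] B) := rfl
        rw [hm, map_mul, map_add, map_mul, map_mul]
        linear_combination (algebraMap (A ⊗[k] B) (A ⊗[k] F) (m2 : A ⊗[k] B)) * e1 +
          (algebraMap (A ⊗[k] B) (A ⊗[k] F) (m1 : A ⊗[k] B)) * e2
    · intro x y h
      have hxy : x = y := hφinj (by rw [← halg, ← halg]; exact h)
      exact ⟨1, by rw [hxy]⟩
  haveI : IsNoetherianRing (A ⊗[k] F) := IsLocalization.isNoetherianRing M _ hnoethAB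
  exact isNoetherianRing_of_ringEquiv _ (Algebra.TensorProduct.comm k A F).toRingEquiv
end

section
/- Let $k$ be a field of characteristic $p > 0$ and $A$ a $k$-algebra. If $k_1/k$ is a finite purely inseparable field extension such that the ideal of $A \otimes_k k^{p^{-\infty}}$ generated by the image of $\mathrm{Nil}(A \otimes_k k_1)$ equals $\mathrm{Nil}(A \otimes_k k^{p^{-\infty}})$, then there is a ring isomorphism $(A \otimes_k k_1)_{\mathrm{red}} \otimes_{k_1} k^{p^{-\infty}} \cong (A \otimes_k k^{p^{-\infty}})_{\mathrm{red}}$. -/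
open scoped TensorProduct

set_option synthInstance.maxHeartbeats 1000000
set_option maxHeartbeats 1000000

/-- Let `k` be a field of characteristic `p > 0`, `A` a `k`-algebra, `k₁/k` a finite purely
inseparable field extension, and `K` the perfect closure of `k` (a perfect field, purely
inseparable over `k`, containing `k₁`). If the ideal of `K ⊗[k] A` generated by the image of
`Nil(k₁ ⊗[k] A)` equals `Nil(K ⊗[k] A)`, then
`K ⊗[k₁] ((k₁ ⊗[k] A)_red) ≅ (K ⊗[k] A)_red`. -/
theorem stmt7 (p : ℕ) [Fact p.Prime] (k k₁ K A : Type) [Field k] [Field k₁] [Field K]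
    [CommRing A] [Algebra k k₁] [Algebra k K] [Algebra k₁ K] [IsScalarTower k k₁ K]
    [Algebra k A] [CharP k p] [ExpChar K p] [PerfectRing K p] [IsPurelyInseparable k K]
    [FiniteDimensional k k₁] [IsPurelyInseparable k k₁]
    (h : Ideal.map
          (Algebra.TensorProduct.map (IsScalarTower.toAlgHom k k₁ K) (AlgHom.id k A)).toRingHom
          (nilradical (k₁ ⊗[k] A))
        = nilradical (K ⊗[k] A)) :
    Nonempty ((K ⊗[k₁] ((k₁ ⊗[k] A) ⧸ nilradical (k₁ ⊗[k] A)))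
      ≃+* ((K ⊗[k] A) ⧸ nilradical (K ⊗[k] A))) := by
  let B := k₁ ⊗[k] A
  let N := nilradical (k₁ ⊗[k] A)
  -- the algebra hom φ : K ⊗[k₁] (k₁ ⊗[k] A) →ₐ[K] K ⊗[k] A
  let ψ : (k₁ ⊗[k] A) →ₐ[k₁] K ⊗[k] A :=
    Algebra.TensorProduct.map (IsScalarTower.toAlgHom k₁ k₁ K) (AlgHom.id k A)
  let φ : K ⊗[k₁] (k₁ ⊗[k] A) →ₐ[K] K ⊗[k] A :=
    Algebra.TensorProduct.lift (Algebra.TensorProduct.includeLeft) ψ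
      (fun x y => Commute.all _ _)
  -- φ agrees with the linear cancelBaseChange equivalence
  let e := TensorProduct.AlgebraTensorModule.cancelBaseChange k k₁ K K A
  have hφe : ∀ z, φ z = e z := by
    intro z
    induction z with
    | zero => simp
    | add x y hx hy => simp only [map_add, hx, hy]
    | tmul x y =>
      induction y using TensorProduct.induction_on with
      | zero => simp
      | add u v hu hv => simp only [TensorProduct.tmul_add, map_add, hu, hv]
      | tmul c a =>
        simp only [φ, ψ, e, Algebra.TensorProduct.lift_tmul,
          Algebra.TensorProduct.includeLeft_apply, Algebra.TensorProduct.map_tmul,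
          AlgHom.coe_id, id_eq, IsScalarTower.coe_toAlgHom',
          Algebra.TensorProduct.tmul_mul_tmul, one_mul,
          TensorProduct.AlgebraTensorModule.cancelBaseChange_tmul, Algebra.smul_def]
        rw [mul_comm]
  have hbij : Function.Bijective φ := by
    have : (φ : K ⊗[k₁] (k₁ ⊗[k] A) → K ⊗[k] A) = e := funext hφe
    rw [show (φ : K ⊗[k₁] (k₁ ⊗[k] A) → K ⊗[k] A) = e from funext hφe]
    exact e.bijective
  let φ' : K ⊗[k₁] (k₁ ⊗[k] A) ≃+* K ⊗[k] A := RingEquiv.ofBijective φ.toRingHom hbij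
  -- the quotient map on the right factor
  let q : (k₁ ⊗[k] A) →ₐ[k₁] (k₁ ⊗[k] A) ⧸ N := Ideal.Quotient.mkₐ k₁ N
  let Ψ : K ⊗[k₁] (k₁ ⊗[k] A) →ₐ[k₁] K ⊗[k₁] ((k₁ ⊗[k] A) ⧸ N) :=
    Algebra.TensorProduct.map (AlgHom.id k₁ K) q
  have hqsurj : Function.Surjective q := Ideal.Quotient.mk_surjective
  have hΨsurj : Function.Surjective Ψ := by
    intro z
    induction z with
    | zero => exact ⟨0, map_zero _⟩
    | add x y hx hy =>
      obtain ⟨x', hx'⟩ := hx; obtain ⟨y', hy'⟩ := hy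
      exact ⟨x' + y', by rw [map_add, hx', hy']⟩
    | tmul x y =>
      obtain ⟨b, rfl⟩ := hqsurj y
      exact ⟨x ⊗ₜ b, by simp [Ψ, Algebra.TensorProduct.map_tmul]⟩
  have hker : RingHom.ker Ψ = N.map (Algebra.TensorProduct.includeRight : (k₁ ⊗[k] A) →ₐ[k₁] K ⊗[k₁] (k₁ ⊗[k] A)) := by
    rw [show Ψ = Algebra.TensorProduct.map (AlgHom.id k₁ K) q from rfl]
    rw [Algebra.TensorProduct.lTensor_ker q hqsurj]
    congr 1
    exact (Ideal.Quotient.mkₐ_ker k₁ N)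
  -- first equivalence: quotient by the kernel
  have e1 : (K ⊗[k₁] (k₁ ⊗[k] A)) ⧸ N.map (Algebra.TensorProduct.includeRight : (k₁ ⊗[k] A) →ₐ[k₁] K ⊗[k₁] (k₁ ⊗[k] A))
      ≃+* K ⊗[k₁] ((k₁ ⊗[k] A) ⧸ N) := by
    rw [← hker]
    exact RingHom.quotientKerEquivOfSurjective hΨsurj
  -- compute the image ideal
  have hcomp : ∀ b : k₁ ⊗[k] A, φ ((Algebra.TensorProduct.includeRight : (k₁ ⊗[k] A) →ₐ[k₁] K ⊗[k₁] (k₁ ⊗[k] A)) b)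
      = (Algebra.TensorProduct.map (IsScalarTower.toAlgHom k k₁ K) (AlgHom.id k A)) b := by
    intro b
    induction b using TensorProduct.induction_on with
    | zero => simp
    | add x y hx hy => simp only [map_add, hx, hy]
    | tmul c a =>
      simp [φ, ψ, Algebra.TensorProduct.lift_tmul, Algebra.TensorProduct.map_tmul,
        Algebra.TensorProduct.includeLeft_apply, Algebra.TensorProduct.tmul_mul_tmul]
  have hideal : (N.map (Algebra.TensorProduct.includeRight : (k₁ ⊗[k] A) →ₐ[k₁] K ⊗[k₁] (k₁ ⊗[k] A))).map
      (φ' : K ⊗[k₁] (k₁ ⊗[k] A) →+* K ⊗[k] A) = nilradical (K ⊗[k] A) := by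
    rw [← h]
    rw [show (Ideal.map (Algebra.TensorProduct.includeRight : (k₁ ⊗[k] A) →ₐ[k₁] K ⊗[k₁] (k₁ ⊗[k] A)) N)
        = Ideal.map (Algebra.TensorProduct.includeRight : (k₁ ⊗[k] A) →ₐ[k₁] K ⊗[k₁] (k₁ ⊗[k] A)).toRingHom N from rfl,
      Ideal.map_map]
    congr 1
    refine RingHom.ext fun b => ?_
    exact hcomp b
  have e2 : (K ⊗[k₁] (k₁ ⊗[k] A)) ⧸ N.map (Algebra.TensorProduct.includeRight : (k₁ ⊗[k] A) →ₐ[k₁] K ⊗[k₁] (k₁ ⊗[k] A))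
      ≃+* (K ⊗[k] A) ⧸ nilradical (K ⊗[k] A) :=
    Ideal.quotientEquiv _ _ φ' hideal.symm
  exact ⟨e1.symm.trans e2⟩
end

section
/- Let $k$ be a field of characteristic $p>0$, and let $F$ be a finitely generated field extension of $k$. Then the nilradical of the (Noetherian) ring $F \otimes_k k^{p^{-\infty}}$ is finitely generated, and consequently there exists a finite purely inseparable subextension $k \subset k_1 \subset k^{p^{-\infty}}$ such that $\mathrm{Nil}(F \otimes_k k_1)$ generates $\mathrm{Nil}(F \otimes_k k^{p^{-\infty}})$ as an ideal. -/
open scoped TensorProduct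

set_option synthInstance.maxHeartbeats 1000000
set_option maxHeartbeats 1000000

/-- A finite purely inseparable subextension `k ⊆ k₁ ⊆ K` (of the perfect closure `K` of `k`)
such that `Nil(k₁ ⊗[k] F)` generates `Nil(K ⊗[k] F)` as an ideal. -/
structure NilGenWitness (k F K : Type) [Field k] [Field F] [Field K]
    [Algebra k F] [Algebra k K] : Type 1 where
  k₁ : Type
  [field_k₁ : Field k₁]
  [alg_k_k₁ : Algebra k k₁]
  [alg_k₁_K : Algebra k₁ K]
  [tower : IsScalarTower k k₁ K]
  findim : FiniteDimensional k k₁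
  pins : IsPurelyInseparable k k₁
  gen : Ideal.map
      (Algebra.TensorProduct.map (IsScalarTower.toAlgHom k k₁ K) (AlgHom.id k F)).toRingHom
      (nilradical (k₁ ⊗[k] F))
    = nilradical (K ⊗[k] F)


section Aux

variable {k : Type} [Field k]

/-- Injectivity of `id ⊗ f` for injective `f`, by flatness. -/
theorem aux_lTensor_injective (K : Type) [Field K] [Algebra k K]
    {A B : Type} [CommRing A] [CommRing B] [Algebra k A] [Algebra k B]
    (f : A →ₐ[k] B) (hf : Function.Injective f) :
    Function.Injective (Algebra.TensorProduct.map (AlgHom.id k K) f) := by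
  have heq : (Algebra.TensorProduct.map (AlgHom.id k K) f).toLinearMap
      = LinearMap.lTensor K f.toLinearMap := by
    apply TensorProduct.ext'
    intro a b
    simp
  have h := Module.Flat.lTensor_preserves_injective_linearMap (M := K) f.toLinearMap hf
  rw [← heq] at h
  exact h

/-- Injectivity of `f ⊗ id` for injective `f`, by flatness. -/
theorem aux_rTensor_injective (F : Type) [Field F] [Algebra k F]
    {A B : Type} [CommRing A] [CommRing B] [Algebra k A] [Algebra k B]
    (f : A →ₐ[k] B) (hf : Function.Injective f) :
    Function.Injective (Algebra.TensorProduct.map f (AlgHom.id k F)) := by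
  have heq : (Algebra.TensorProduct.map f (AlgHom.id k F)).toLinearMap
      = LinearMap.rTensor F f.toLinearMap := by
    apply TensorProduct.ext'
    intro a b
    simp
  have h := Module.Flat.rTensor_preserves_injective_linearMap (M := F) f.toLinearMap hf
  rw [← heq] at h
  exact h

/-- Base change of a finite type algebra is finite type. -/
theorem aux_finiteType (K A : Type) [Field K] [Algebra k K] [CommRing A] [Algebra k A]
    [h : Algebra.FiniteType k A] : Algebra.FiniteType K (K ⊗[k] A) := by
  classical
  obtain ⟨S, hS⟩ := h.out
  refine ⟨S.image (fun a => (1 : K) ⊗ₜ[k] a), ?_⟩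
  set T := Algebra.adjoin K (↑(S.image (fun a => (1 : K) ⊗ₜ[k] a)) : Set (K ⊗[k] A)) with hT
  have key : ∀ a : A, (1 : K) ⊗ₜ[k] a ∈ T := by
    have hle : Algebra.adjoin k (S : Set A) ≤
        (Subalgebra.restrictScalars k T).comap
          (Algebra.TensorProduct.includeRight (R := k) (A := K) (B := A)) := by
      apply Algebra.adjoin_le
      intro a ha
      simp only [SetLike.mem_coe, Subalgebra.mem_comap, Subalgebra.mem_restrictScalars,
        Algebra.TensorProduct.includeRight_apply]
      exact Algebra.subset_adjoin (Finset.mem_coe.mpr (Finset.mem_image_of_mem _ ha))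
    intro a
    have ha : a ∈ Algebra.adjoin k (S : Set A) := hS ▸ trivial
    simpa using hle ha
  rw [eq_top_iff]
  have h2 : (⊤ : Subalgebra k (K ⊗[k] A)) ≤ Subalgebra.restrictScalars k T := by
    rw [← Algebra.TensorProduct.adjoin_tmul_eq_top]
    apply Algebra.adjoin_le
    rintro _ ⟨c, a, rfl⟩
    have hca : c ⊗ₜ[k] a = (algebraMap K (K ⊗[k] A) c) * ((1 : K) ⊗ₜ[k] a) := by
      simp [Algebra.TensorProduct.algebraMap_apply, Algebra.TensorProduct.tmul_mul_tmul]
    show c ⊗ₜ[k] a ∈ Subalgebra.restrictScalars k T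
    rw [Subalgebra.mem_restrictScalars, hca]
    exact mul_mem (Subalgebra.algebraMap_mem _ c) (key a)
  intro x _
  simpa using h2 trivial

/-- Every element of a finitely generated field extension is a quotient of elements of the
subalgebra generated by the generators. -/
theorem aux_frac {F : Type} [Field F] [Algebra k F] {s : Finset F}
    (hs : IntermediateField.adjoin k (s : Set F) = ⊤) (x : F) :
    ∃ a b : Algebra.adjoin k (s : Set F), b ≠ 0 ∧ x * b = a := by
  have hx : x ∈ IntermediateField.adjoin k (s : Set F) := hs ▸ trivial
  rw [IntermediateField.mem_adjoin_iff] at hx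
  obtain ⟨r, q, hrq⟩ := hx
  have hmem : ∀ P : MvPolynomial (s : Set F) k,
      MvPolynomial.aeval (R := k) (Subtype.val : ↥(s : Set F) → F) P ∈ Algebra.adjoin k (s : Set F) := by
    intro P
    have : MvPolynomial.aeval (R := k) (Subtype.val : ↥(s : Set F) → F) P ∈
        Algebra.adjoin k (Set.range (Subtype.val : ↥(s : Set F) → F)) := by
      rw [Algebra.adjoin_range_eq_range_aeval]
      exact ⟨P, rfl⟩
    rwa [Subtype.range_coe] at this
  by_cases hq : MvPolynomial.aeval (R := k) (Subtype.val : ↥(s : Set F) → F) q = 0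
  · refine ⟨0, 1, one_ne_zero, ?_⟩
    rw [hrq, hq, div_zero, zero_mul]
    simp
  · refine ⟨⟨_, hmem r⟩, ⟨_, hmem q⟩, ?_, ?_⟩
    · intro h
      exact hq (congrArg Subtype.val h)
    · rw [hrq]
      exact div_mul_cancel₀ _ hq

end Aux

/-- Let `k` be a field of characteristic `p > 0` and `F` a finitely generated field extension
of `k`, and let `K` be the perfect closure of `k`. Then the nilradical of the (Noetherian) ring
`K ⊗[k] F` is finitely generated, and consequently there is a finite purely inseparable
subextension `k ⊆ k₁ ⊆ K` such that `Nil(k₁ ⊗[k] F)` generates `Nil(K ⊗[k] F)`. -/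
theorem stmt8 (p : ℕ) [Fact p.Prime] (k F K : Type) [Field k] [Field F] [Field K]
    [Algebra k F] [Algebra k K] [CharP k p]
    [ExpChar K p] [PerfectRing K p] [IsPurelyInseparable k K]
    (hfg : ∃ s : Finset F, IntermediateField.adjoin k (s : Set F) = ⊤) :
    (nilradical (K ⊗[k] F)).FG ∧ Nonempty (NilGenWitness k F K) := by
  classical
  obtain ⟨s, hs⟩ := hfg
  -- the finitely generated subalgebra
  set A : Subalgebra k F := Algebra.adjoin k (s : Set F) with hA
  haveI : Algebra.FiniteType k ↥A := (Subalgebra.fg_iff_finiteType A).mp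
    (Subalgebra.fg_adjoin_finset s)
  haveI : Algebra.FiniteType K (K ⊗[k] ↥A) := aux_finiteType K ↥A
  haveI hnA : IsNoetherianRing (K ⊗[k] ↥A) := Algebra.FiniteType.isNoetherianRing K (K ⊗[k] ↥A)
  -- the localization map
  set φ : K ⊗[k] ↥A →ₐ[k] K ⊗[k] F :=
    Algebra.TensorProduct.map (AlgHom.id k K) A.val with hφdef
  have hφ : Function.Injective φ := aux_lTensor_injective K A.val Subtype.val_injective
  letI : Algebra (K ⊗[k] ↥A) (K ⊗[k] F) := φ.toRingHom.toAlgebra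
  have halg : ∀ x : K ⊗[k] ↥A, algebraMap (K ⊗[k] ↥A) (K ⊗[k] F) x = φ x := fun _ => rfl
  set M : Submonoid (K ⊗[k] ↥A) :=
    Submonoid.map (Algebra.TensorProduct.includeRight (R := k) (A := K) (B := ↥A))
      (nonZeroDivisors ↥A) with hM
  have hcoe : ∀ a : ↥A, a ≠ 0 → ((a : F) ≠ 0) := by
    intro a ha h
    exact ha (Subtype.ext h)
  haveI : IsLocalization M (K ⊗[k] F) := by
    refine ⟨?_, ?_, ?_⟩
    · rintro ⟨_, a, ha, rfl⟩
      have ha0 : (a : F) ≠ 0 := hcoe a (nonZeroDivisors.ne_zero ha)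
      refine IsUnit.of_mul_eq_one ((1 : K) ⊗ₜ[k] (a : F)⁻¹) ?_
      rw [halg]
      simp only [hφdef, Algebra.TensorProduct.includeRight_apply,
        Algebra.TensorProduct.map_tmul, AlgHom.coe_id, id_eq, Subalgebra.coe_val,
        Algebra.TensorProduct.tmul_mul_tmul, mul_one, mul_inv_cancel₀ ha0]
      rfl
    · intro z
      induction z using TensorProduct.induction_on with
      | zero => exact ⟨⟨0, 1⟩, by simp⟩
      | tmul c f =>
          obtain ⟨a, b, hb, hfb⟩ := aux_frac hs f
          refine ⟨⟨c ⊗ₜ[k] a, ⟨_, ⟨b, mem_nonZeroDivisors_of_ne_zero hb, rfl⟩⟩⟩, ?_⟩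
          simp only [halg, hφdef, Algebra.TensorProduct.includeRight_apply,
            Algebra.TensorProduct.map_tmul, AlgHom.coe_id, id_eq, Subalgebra.coe_val,
            Algebra.TensorProduct.tmul_mul_tmul, mul_one]
          rw [hfb]
      | add x y hx hy =>
          obtain ⟨⟨y1, m1⟩, h1⟩ := hx
          obtain ⟨⟨y2, m2⟩, h2⟩ := hy
          refine ⟨⟨y1 * (m2 : K ⊗[k] ↥A) + y2 * (m1 : K ⊗[k] ↥A), m1 * m2⟩, ?_⟩
          simp only [Submonoid.coe_mul, map_mul, map_add] at h1 h2 ⊢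
          rw [add_mul, ← h1, ← h2]
          ring
    · intro x y h
      have hxy : x = y := hφ h
      exact ⟨1, by rw [hxy]⟩
  haveI hnoeth : IsNoetherianRing (K ⊗[k] F) := IsLocalization.isNoetherianRing M (K ⊗[k] F) hnA
  have hFG : (nilradical (K ⊗[k] F)).FG := IsNoetherian.noetherian _
  refine ⟨hFG, ?_⟩
  -- Part 2 : the witness
  obtain ⟨T, hT⟩ := hFG
  choose rep hrep using fun t : K ⊗[k] F => TensorProduct.exists_finset t
  set E : Finset K := T.biUnion (fun t => (rep t).image Prod.fst) with hE
  set k₁ : IntermediateField k K := IntermediateField.adjoin k (E : Set K) with hk₁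
  haveI hfd : FiniteDimensional k ↥k₁ :=
    IntermediateField.finiteDimensional_adjoin
      (fun x _ => IsPurelyInseparable.isIntegral' k x)
  haveI hpi : IsPurelyInseparable k ↥k₁ := inferInstance
  set ψ : ↥k₁ ⊗[k] F →ₐ[k] K ⊗[k] F :=
    Algebra.TensorProduct.map (IsScalarTower.toAlgHom k ↥k₁ K) (AlgHom.id k F) with hψdef
  have hψ : Function.Injective ψ :=
    aux_rTensor_injective F _ (IsScalarTower.toAlgHom k ↥k₁ K).injective
  refine ⟨{ k₁ := ↥k₁, findim := hfd, pins := hpi, gen := ?_ }⟩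
  apply le_antisymm
  · rw [Ideal.map_le_iff_le_comap]
    intro x hx
    exact mem_nilradical.mpr ((mem_nilradical.mp hx).map ψ.toRingHom)
  · rw [← hT]
    rw [Ideal.span_le]
    intro t ht
    have htT : t ∈ T := ht
    have h1 : ∀ i ∈ rep t, i.1 ∈ k₁ := by
      intro i hi
      exact IntermediateField.subset_adjoin _ _
        (Finset.mem_biUnion.mpr ⟨t, htT, Finset.mem_image_of_mem _ hi⟩)
    set w : ↥k₁ ⊗[k] F :=
      ∑ i ∈ (rep t).attach, (⟨i.1.1, h1 i.1 i.2⟩ : ↥k₁) ⊗ₜ[k] i.1.2 with hw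
    have hwt : ψ w = t := by
      rw [hw, map_sum]
      simp only [hψdef, Algebra.TensorProduct.map_tmul, AlgHom.coe_id, id_eq,
        IsScalarTower.coe_toAlgHom', IntermediateField.algebraMap_apply]
      rw [Finset.sum_attach (rep t) (fun i => i.1 ⊗ₜ[k] i.2), ← hrep t]
    have hwn : w ∈ nilradical (↥k₁ ⊗[k] F) := by
      have htn : t ∈ nilradical (K ⊗[k] F) := hT ▸ Ideal.subset_span ht
      obtain ⟨n, hn⟩ := mem_nilradical.mp htn
      refine mem_nilradical.mpr ⟨n, hψ ?_⟩
      have h2 : ψ (w ^ n) = ψ w ^ n := map_pow ψ.toRingHom w n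
      rw [h2, hwt, hn]
      exact (map_zero ψ.toRingHom).symm
    have := Ideal.mem_map_of_mem ψ.toRingHom hwn
    rw [show ψ.toRingHom w = t from hwt] at this
    exact this
end
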